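/- For r ≥ 3, if G is a K_{1,r}-free graph, then α(G) ≤ (r-1)·γ(G). -/
import Mathlib


open Finset

variable {V : Type*}

/-- A finset is independent in `G` : no two of its vertices are adjacent. -/
def IsIndepFinset (G : SimpleGraph V) (S : Finset V) : Prop :=
  ∀ u ∈ S, ∀ v ∈ S, ¬ G.Adj u v

/-- A finset dominates `G` : every vertex outside it has a neighbour inside it. -/
def IsDomFinset (G : SimpleGraph V) (D : Finset V) : Prop :=
  ∀ v, v ∉ D → ∃ u ∈ D, G.Adj u v

/-- The independence number of `G`. -/
noncomputable def indepNum [Fintype V] (G : SimpleGraph V) : ℕ :=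
  sSup {n | ∃ S : Finset V, IsIndepFinset G S ∧ S.card = n}

/-- The domination number of `G`. -/
noncomputable def domNum [Fintype V] (G : SimpleGraph V) : ℕ :=
  sInf {n | ∃ D : Finset V, IsDomFinset G D ∧ D.card = n}

/-- `G` is `K_{1,r}`-free: no vertex has `r` pairwise nonadjacent neighbours. -/
def K1rFree (G : SimpleGraph V) (r : ℕ) : Prop :=
  ¬ ∃ (v : V) (A : Finset V), (∀ a ∈ A, G.Adj v a) ∧
      (∀ a ∈ A, ∀ b ∈ A, a ≠ b → ¬ G.Adj a b) ∧ A.card = r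

/-- For r ≥ 3, K_{1,r}-free graphs satisfy α(G) ≤ (r-1)·γ(G). -/
theorem stmt1 [Fintype V] (G : SimpleGraph V) (r : ℕ) (hr : 3 ≤ r)
    (hG : K1rFree G r) :
    indepNum G ≤ (r - 1) * domNum G := by
  classical
  -- key lemma: any independent set vs any dominating set
  have key : ∀ S D : Finset V, IsIndepFinset G S → IsDomFinset G D →
      S.card ≤ (r - 1) * D.card := by
    intro S D hS hD
    -- map each s ∈ S to itself (if s ∈ D) or a dominator in D
    have hdom : ∀ s : V, s ∉ D → ∃ u ∈ D, G.Adj u s := hD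
    set f : V → V := fun s => if h : s ∈ D then s else (hdom s h).choose with hf
    have hmaps : ∀ s ∈ S, f s ∈ D := by
      intro s _
      by_cases h : s ∈ D
      · simp [hf, h]
      · simpa [hf, h] using (hdom s h).choose_spec.1
    have hadj : ∀ s, s ∉ D → G.Adj (f s) s := by
      intro s h
      simpa [hf, h] using (hdom s h).choose_spec.2
    apply Finset.card_le_mul_card_image_of_maps_to hmaps
    intro d _
    set T := S.filter (fun s => f s = d) with hT
    have hTadj : ∀ s ∈ T, s ≠ d → G.Adj d s := by
      intro s hs hne
      rw [hT, Finset.mem_filter] at hs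
      obtain ⟨hsS, hfs⟩ := hs
      have hsD : s ∉ D := by
        intro h
        apply hne
        simpa [hf, h] using hfs
      have := hadj s hsD
      rwa [hfs] at this
    by_cases hdS : d ∈ S
    · -- fiber is at most {d}
      have hsub : T ⊆ {d} := by
        intro s hs
        rw [Finset.mem_singleton]
        by_contra hne
        exact hS d hdS s (Finset.mem_filter.mp hs).1 (hTadj s hs hne)
      calc T.card ≤ 1 := by simpa using Finset.card_le_card hsub
        _ ≤ r - 1 := by omega
    · -- all elements of T are neighbours of d, pairwise non-adjacent
      by_contra hlt
      push_neg at hlt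
      have hrT : r ≤ T.card := by omega
      obtain ⟨A, hAT, hAcard⟩ := Finset.exists_subset_card_eq hrT
      apply hG
      refine ⟨d, A, ?_, ?_, hAcard⟩
      · intro a ha
        have haT := hAT ha
        have hane : a ≠ d := by
          rintro rfl
          exact hdS (Finset.mem_filter.mp haT).1
        exact hTadj a haT hane
      · intro a ha b hb hne
        exact hS a (Finset.mem_filter.mp (hAT ha)).1 b
          (Finset.mem_filter.mp (hAT hb)).1
  -- univ is dominating
  have hunivdom : IsDomFinset G (Finset.univ : Finset V) := by
    intro v hv; exact absurd (Finset.mem_univ v) hv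
  have hne : {n | ∃ D : Finset V, IsDomFinset G D ∧ D.card = n}.Nonempty :=
    ⟨_, Finset.univ, hunivdom, rfl⟩
  obtain ⟨D, hD, hDcard⟩ := Nat.sInf_mem hne
  have hne2 : {n | ∃ S : Finset V, IsIndepFinset G S ∧ S.card = n}.Nonempty :=
    ⟨0, ∅, by intro u hu; simp at hu, rfl⟩
  apply csSup_le hne2
  rintro n ⟨S, hS, rfl⟩
  calc S.card ≤ (r - 1) * D.card := key S D hS hD
    _ = (r - 1) * domNum G := by rw [hDcard]; rfl
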